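/- Every (p^{-k}, p^k)-locally scaling map f : ℤ_p → ℤ_p (k ≥ 1) can be written as f = S^k ∘ w, where S is the shift map on ℤ_p and w : ℤ_p → ℤ_p is a bijective isometry. -/

import Mathlib

section Aux

variable {p : ℕ} [Fact p.Prime]

lemma aux_norm_add_eq_of_lt {a b : ℤ_[p]} (h : ‖b‖ < ‖a‖) : ‖a + b‖ = ‖a‖ := by
  refine le_antisymm ((PadicInt.nonarchimedean a b).trans (max_le le_rfl h.le)) ?_
  by_contra hlt
  push_neg at hlt
  have h2 : ‖a‖ ≤ max ‖a + b‖ ‖b‖ := by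
    calc ‖a‖ = ‖(a + b) + (-b)‖ := by ring_nf
      _ ≤ max ‖a + b‖ ‖-b‖ := PadicInt.nonarchimedean _ _
      _ = max ‖a + b‖ ‖b‖ := by rw [norm_neg]
  rcases max_cases ‖a + b‖ ‖b‖ with ⟨he, _⟩ | ⟨he, _⟩ <;> rw [he] at h2 <;> linarith

lemma aux_appr_unique (x : ℤ_[p]) (n c : ℕ) (hc : c < p ^ n)
    (h : x - (c : ℤ_[p]) ∈ Ideal.span {(p : ℤ_[p]) ^ n}) : x.appr n = c := by
  have h1 := PadicInt.appr_spec n x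
  have h3 : (((x.appr n : ℤ) - (c : ℤ) : ℤ) : ℤ_[p]) ∈ Ideal.span {(p : ℤ_[p]) ^ n} := by
    have h2 := Ideal.sub_mem _ h h1
    have heq : x - (c : ℤ_[p]) - (x - ((x.appr n : ℕ) : ℤ_[p]))
        = (((x.appr n : ℤ) - (c : ℤ) : ℤ) : ℤ_[p]) := by push_cast; ring
    rwa [heq] at h2
  rw [← PadicInt.norm_le_pow_iff_mem_span_pow, PadicInt.norm_int_le_pow_iff_dvd] at h3
  have hdvd : ((p ^ n : ℕ) : ℤ) ∣ ((x.appr n : ℤ) - (c : ℤ)) := by exact_mod_cast h3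
  have habs : |(x.appr n : ℤ) - (c : ℤ)| < ((p ^ n : ℕ) : ℤ) := by
    have h4 := PadicInt.appr_lt x n
    rw [abs_lt]
    omega
  have := Int.eq_zero_of_abs_lt_dvd hdvd habs
  omega

lemma aux_isometry_surjective (g : ℤ_[p] → ℤ_[p])
    (hg : ∀ a b : ℤ_[p], ‖g a - g b‖ = ‖a - b‖) : Function.Surjective g := by
  have hiso : Isometry g := Isometry.of_dist_eq fun a b => by
    rw [dist_eq_norm, dist_eq_norm, hg]
  have hclosed : IsClosed (Set.range g) := (isCompact_range hiso.continuous).isClosed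
  intro z
  have hmem : z ∈ closure (Set.range g) := by
    rw [Metric.mem_closure_iff]
    intro ε hε
    -- pick n with p^(-n) < ε
    have hp1 : (1 : ℝ) < (p : ℝ) := by
      exact_mod_cast (Fact.out : p.Prime).one_lt
    obtain ⟨n, hn⟩ := exists_pow_lt_of_lt_one hε
      (by rw [inv_lt_one_iff₀]; right; exact hp1 : (p : ℝ)⁻¹ < 1)
    haveI : NeZero (p ^ n) := ⟨pow_ne_zero n (Fact.out : p.Prime).ne_zero⟩
    -- the induced map mod p^n is injective hence surjective
    set F : ZMod (p ^ n) → ZMod (p ^ n) :=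
      fun a => PadicInt.toZModPow n (g ((a.val : ℕ) : ℤ_[p])) with hF
    have key : ∀ u v : ℤ_[p], PadicInt.toZModPow n u = PadicInt.toZModPow n v ↔
        ‖u - v‖ ≤ (p : ℝ) ^ (-n : ℤ) := by
      intro u v
      rw [PadicInt.norm_le_pow_iff_mem_span_pow, ← PadicInt.ker_toZModPow, RingHom.mem_ker,
        map_sub, sub_eq_zero]
    have hFinj : Function.Injective F := by
      intro a b hab
      rw [hF] at hab
      simp only at hab
      rw [key] at hab
      rw [hg] at hab
      rw [← key] at hab
      rw [map_natCast, map_natCast] at hab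
      rwa [ZMod.natCast_rightInverse a, ZMod.natCast_rightInverse b] at hab
    have hFsurj : Function.Surjective F := Finite.surjective_of_injective hFinj
    obtain ⟨a, ha⟩ := hFsurj (PadicInt.toZModPow n z)
    refine ⟨g ((a.val : ℕ) : ℤ_[p]), ⟨_, rfl⟩, ?_⟩
    rw [hF] at ha
    simp only at ha
    rw [key] at ha
    rw [dist_eq_norm, ← norm_neg]
    calc ‖-(z - g ((a.val : ℕ) : ℤ_[p]))‖
        = ‖g ((a.val : ℕ) : ℤ_[p]) - z‖ := by ring_nf
      _ ≤ (p : ℝ) ^ (-n : ℤ) := ha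
      _ = ((p : ℝ)⁻¹) ^ n := by rw [zpow_neg, zpow_natCast, inv_pow]
      _ < ε := hn
  rwa [hclosed.closure_eq] at hmem

lemma aux_shift_iter (S : ℤ_[p] → ℤ_[p])
    (hS : ∀ x : ℤ_[p], (p : ℤ_[p]) * S x = x - ((x.appr 1 : ℕ) : ℤ_[p])) :
    ∀ (k : ℕ) (y : ℤ_[p]) (c : ℕ), c < p ^ k → S^[k] ((p : ℤ_[p]) ^ k * y + c) = y := by
  intro k
  induction k with
  | zero =>
    intro y c hc
    simp only [pow_zero, Nat.lt_one_iff] at hc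
    subst hc
    simp
  | succ k ih =>
    intro y c hc
    have hp0 : (p : ℤ_[p]) ≠ 0 := by
      exact_mod_cast Nat.cast_ne_zero.mpr (Fact.out : p.Prime).ne_zero
    have hdm : (p : ℤ_[p]) * ((c / p : ℕ) : ℤ_[p]) + ((c % p : ℕ) : ℤ_[p]) = (c : ℤ_[p]) := by
      exact_mod_cast congrArg (Nat.cast : ℕ → ℤ_[p]) (Nat.div_add_mod c p)
    have happr : ((p : ℤ_[p]) ^ (k + 1) * y + c).appr 1 = c % p := by
      apply aux_appr_unique
      · simpa using Nat.mod_lt c (Fact.out : p.Prime).pos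
      · rw [Ideal.mem_span_singleton]
        refine ⟨(p : ℤ_[p]) ^ k * y + ((c / p : ℕ) : ℤ_[p]), ?_⟩
        rw [← hdm]; ring
    have hs : S ((p : ℤ_[p]) ^ (k + 1) * y + c) = (p : ℤ_[p]) ^ k * y + ((c / p : ℕ) : ℤ_[p]) := by
      apply mul_left_cancel₀ hp0
      rw [hS, happr, ← hdm]
      ring
    rw [Function.iterate_succ_apply, hs]
    exact ih y (c / p) (Nat.div_lt_of_lt_mul (by rwa [pow_succ'] at hc))

end Aux

theorem locally_scaling_decomposition (p : ℕ) [Fact p.Prime]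
    (S : ℤ_[p] → ℤ_[p])
    (hS : ∀ x : ℤ_[p], (p : ℤ_[p]) * S x = x - ((x.appr 1 : ℕ) : ℤ_[p]))
    (k : ℕ) (hk : 1 ≤ k) (f : ℤ_[p] → ℤ_[p])
    (hscal : ∀ x y : ℤ_[p], ‖x - y‖ ≤ (p : ℝ) ^ (-(k : ℤ)) →
      ‖f x - f y‖ = (p : ℝ) ^ (k : ℤ) * ‖x - y‖) :
    ∃ w : ℤ_[p] → ℤ_[p], Function.Bijective w ∧
      (∀ x y : ℤ_[p], ‖w x - w y‖ = ‖x - y‖) ∧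
      f = S^[k] ∘ w := by
  set w : ℤ_[p] → ℤ_[p] := fun x => (p : ℤ_[p]) ^ k * f x + ((x.appr k : ℕ) : ℤ_[p]) with hw
  have hpR : (0 : ℝ) < (p : ℝ) := by exact_mod_cast (Fact.out : p.Prime).pos
  have hpk : ‖(p : ℤ_[p]) ^ k‖ = (p : ℝ) ^ (-(k : ℤ)) := by
    rw [norm_pow, PadicInt.norm_p, zpow_neg, zpow_natCast, inv_pow]
  have hcancel : (p : ℝ) ^ (-(k : ℤ)) * (p : ℝ) ^ (k : ℤ) = 1 := by
    rw [← zpow_add₀ (ne_of_gt hpR)]; simp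
  -- isometry
  have hiso : ∀ x y : ℤ_[p], ‖w x - w y‖ = ‖x - y‖ := by
    intro x y
    by_cases h : ‖x - y‖ ≤ (p : ℝ) ^ (-(k : ℤ))
    · -- close: appr's agree
      have happr : x.appr k = y.appr k := by
        apply aux_appr_unique x k (y.appr k) (PadicInt.appr_lt y k)
        have h1 : x - y ∈ Ideal.span {(p : ℤ_[p]) ^ k} :=
          (PadicInt.norm_le_pow_iff_mem_span_pow _ k).mp h
        have h2 := PadicInt.appr_spec k y
        have heq : x - ((y.appr k : ℕ) : ℤ_[p]) = (x - y) + (y - ((y.appr k : ℕ) : ℤ_[p])) := by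
          ring
        rw [heq]
        exact Ideal.add_mem _ h1 h2
      have heq : w x - w y = (p : ℤ_[p]) ^ k * (f x - f y) := by
        rw [hw]; simp only [happr]; ring
      rw [heq, norm_mul, hpk, hscal x y h, ← mul_assoc, hcancel, one_mul]
    · push_neg at h
      have hb : ‖(p : ℤ_[p]) ^ k * (f x - f y)‖ ≤ (p : ℝ) ^ (-(k : ℤ)) := by
        rw [norm_mul, hpk]
        calc (p : ℝ) ^ (-(k : ℤ)) * ‖f x - f y‖
            ≤ (p : ℝ) ^ (-(k : ℤ)) * 1 :=
              mul_le_mul_of_nonneg_left (PadicInt.norm_le_one _) (by positivity)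
          _ = (p : ℝ) ^ (-(k : ℤ)) := mul_one _
      have hax : ‖x - ((x.appr k : ℕ) : ℤ_[p])‖ ≤ (p : ℝ) ^ (-(k : ℤ)) :=
        (PadicInt.norm_le_pow_iff_mem_span_pow _ k).mpr (PadicInt.appr_spec k x)
      have hay : ‖y - ((y.appr k : ℕ) : ℤ_[p])‖ ≤ (p : ℝ) ^ (-(k : ℤ)) :=
        (PadicInt.norm_le_pow_iff_mem_span_pow _ k).mpr (PadicInt.appr_spec k y)
      have ha : ‖((x.appr k : ℕ) : ℤ_[p]) - ((y.appr k : ℕ) : ℤ_[p])‖ = ‖x - y‖ := by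
        have step1 : ‖(x - y) + (-(x - ((x.appr k : ℕ) : ℤ_[p])))‖ = ‖x - y‖ :=
          aux_norm_add_eq_of_lt (by rw [norm_neg]; exact lt_of_le_of_lt hax h)
        have step2 : ‖((x - y) + (-(x - ((x.appr k : ℕ) : ℤ_[p])))) +
            (y - ((y.appr k : ℕ) : ℤ_[p]))‖ = ‖x - y‖ := by
          rw [aux_norm_add_eq_of_lt (by rw [step1]; exact lt_of_le_of_lt hay h), step1]
        have heq : ((x - y) + (-(x - ((x.appr k : ℕ) : ℤ_[p])))) +
            (y - ((y.appr k : ℕ) : ℤ_[p]))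
            = ((x.appr k : ℕ) : ℤ_[p]) - ((y.appr k : ℕ) : ℤ_[p]) := by ring
        rwa [heq] at step2
      have heq : w x - w y = (((x.appr k : ℕ) : ℤ_[p]) - ((y.appr k : ℕ) : ℤ_[p]))
          + (p : ℤ_[p]) ^ k * (f x - f y) := by rw [hw]; ring
      rw [heq, aux_norm_add_eq_of_lt (by rw [ha]; exact lt_of_le_of_lt hb h), ha]
  -- f = S^[k] ∘ w
  have hcomp : f = S^[k] ∘ w := by
    funext x
    rw [Function.comp_apply, hw]
    exact (aux_shift_iter S hS k (f x) (x.appr k) (PadicInt.appr_lt x k)).symm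
  refine ⟨w, ⟨?_, ?_⟩, hiso, hcomp⟩
  · -- injective
    intro a b hab
    have : ‖a - b‖ = 0 := by rw [← hiso a b, hab, sub_self, norm_zero]
    have := norm_eq_zero.mp this
    exact sub_eq_zero.mp this
  · -- surjective
    intro z
    obtain ⟨u, hu⟩ : ∃ u : ℤ_[p], z - ((z.appr k : ℕ) : ℤ_[p]) = (p : ℤ_[p]) ^ k * u := by
      have := PadicInt.appr_spec k z
      rw [Ideal.mem_span_singleton] at this
      obtain ⟨u, hu⟩ := this
      exact ⟨u, hu⟩
    set g : ℤ_[p] → ℤ_[p] := fun t => f (((z.appr k : ℕ) : ℤ_[p]) + (p : ℤ_[p]) ^ k * t) with hg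
    have hgiso : ∀ a b : ℤ_[p], ‖g a - g b‖ = ‖a - b‖ := by
      intro a b
      have hdiff : (((z.appr k : ℕ) : ℤ_[p]) + (p : ℤ_[p]) ^ k * a)
          - (((z.appr k : ℕ) : ℤ_[p]) + (p : ℤ_[p]) ^ k * b) = (p : ℤ_[p]) ^ k * (a - b) := by
        ring
      have hsmall : ‖(((z.appr k : ℕ) : ℤ_[p]) + (p : ℤ_[p]) ^ k * a)
          - (((z.appr k : ℕ) : ℤ_[p]) + (p : ℤ_[p]) ^ k * b)‖ ≤ (p : ℝ) ^ (-(k : ℤ)) := by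
        rw [hdiff, norm_mul, hpk]
        calc (p : ℝ) ^ (-(k : ℤ)) * ‖a - b‖ ≤ (p : ℝ) ^ (-(k : ℤ)) * 1 :=
              mul_le_mul_of_nonneg_left (PadicInt.norm_le_one _) (by positivity)
          _ = (p : ℝ) ^ (-(k : ℤ)) := mul_one _
      rw [hg]
      simp only
      rw [hscal _ _ hsmall, hdiff, norm_mul, hpk, ← mul_assoc,
        mul_comm ((p : ℝ) ^ (k : ℤ)), hcancel, one_mul]
    obtain ⟨t, ht⟩ := aux_isometry_surjective g hgiso u
    refine ⟨((z.appr k : ℕ) : ℤ_[p]) + (p : ℤ_[p]) ^ k * t, ?_⟩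
    have happr : (((z.appr k : ℕ) : ℤ_[p]) + (p : ℤ_[p]) ^ k * t).appr k = z.appr k := by
      apply aux_appr_unique _ k _ (PadicInt.appr_lt z k)
      rw [Ideal.mem_span_singleton]
      exact ⟨t, by ring⟩
    rw [hw]
    simp only [happr]
    have hft : f (((z.appr k : ℕ) : ℤ_[p]) + (p : ℤ_[p]) ^ k * t) = u := ht
    rw [hft, ← hu]
    ring
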